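/- arXiv:1409.5391 — 4 statements merged into one kernel-verified Lean document; each statement's English description precedes it below -/
import Mathlib

section
/- Let y ∈ ℝⁿ, λ ≥ 0, α ∈ [0,1], and let ‖·‖ be any norm on ℝᵐ and B ∈ ℝ^{m×n} any matrix. Let θ̂ be the unique minimizer of (1/2)‖y − θ‖₂² + αλ‖Bθ‖. Then the unique minimizer of (1/2)‖y − θ‖₂² + αλ‖Bθ‖ + (1−α)λ‖θ‖₂ is max(1 − (1−α)λ/‖θ̂‖₂, 0) · θ̂ (interpreted as 0 when θ̂ = 0). -/
open Finset




lemma esq (n : ℕ) (x : Fin n → ℝ) :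
    Real.sqrt (∑ i, (x i)^2) = ‖(WithLp.equiv 2 (Fin n → ℝ)).symm x‖ := by
  rw [EuclideanSpace.norm_eq]
  congr 1
  exact Finset.sum_congr rfl fun i _ => by rw [Real.norm_eq_abs, sq_abs]; rfl

lemma E_smul (n : ℕ) (a : ℝ) (x : Fin n → ℝ) :
    Real.sqrt (∑ i, ((a • x) i)^2) = |a| * Real.sqrt (∑ i, (x i)^2) := by
  rw [esq, esq]
  have : (WithLp.equiv 2 (Fin n → ℝ)).symm (a • x) = a • (WithLp.equiv 2 (Fin n → ℝ)).symm x := rfl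
  rw [this, norm_smul, Real.norm_eq_abs]

lemma E_triangle (n : ℕ) (x z : Fin n → ℝ) :
    Real.sqrt (∑ i, ((x + z) i)^2) ≤ Real.sqrt (∑ i, (x i)^2) + Real.sqrt (∑ i, (z i)^2) := by
  rw [esq, esq, esq]
  have : (WithLp.equiv 2 (Fin n → ℝ)).symm (x + z) = (WithLp.equiv 2 (Fin n → ℝ)).symm x + (WithLp.equiv 2 (Fin n → ℝ)).symm z := rfl
  rw [this]; exact norm_add_le _ _

lemma E_sub_abs (n : ℕ) (x z : Fin n → ℝ) :
    |Real.sqrt (∑ i, (x i)^2) - Real.sqrt (∑ i, (z i)^2)| ≤ Real.sqrt (∑ i, ((x - z) i)^2) := by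
  rw [esq, esq, esq]
  have : (WithLp.equiv 2 (Fin n → ℝ)).symm (x - z) = (WithLp.equiv 2 (Fin n → ℝ)).symm x - (WithLp.equiv 2 (Fin n → ℝ)).symm z := rfl
  rw [this]; exact abs_norm_sub_norm_le _ _

lemma strong_min (n : ℕ) (y : Fin n → ℝ) (ψ : (Fin n → ℝ) → ℝ)
    (hψ : ∀ (t : ℝ), 0 < t → t ≤ 1 → ∀ a b : Fin n → ℝ,
      ψ ((1-t) • a + t • b) ≤ (1-t) * ψ a + t * ψ b)
    (mm : Fin n → ℝ)
    (hm : ∀ θ, (1/2) * ∑ i, (y i - mm i)^2 + ψ mm ≤ (1/2) * ∑ i, (y i - θ i)^2 + ψ θ) :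
    ∀ θ, (1/2) * ∑ i, (y i - mm i)^2 + ψ mm + (1/2) * ∑ i, (θ i - mm i)^2
      ≤ (1/2) * ∑ i, (y i - θ i)^2 + ψ θ := by
  intro θ
  set S : ℝ := ∑ i, (θ i - mm i)^2 with hS
  have hSnn : 0 ≤ S := Finset.sum_nonneg fun i _ => sq_nonneg _
  have key : ∀ t : ℝ, 0 < t → t ≤ 1 →
      (1/2) * ∑ i, (y i - mm i)^2 + ψ mm + (1/2) * (1-t) * S
        ≤ (1/2) * ∑ i, (y i - θ i)^2 + ψ θ := by
    intro t ht ht1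
    have hQ : ∑ i, (y i - ((1-t) • mm + t • θ) i)^2
        = (1-t) * ∑ i, (y i - mm i)^2 + t * ∑ i, (y i - θ i)^2 - t*(1-t) * S := by
      rw [hS, Finset.mul_sum, Finset.mul_sum, Finset.mul_sum, ← Finset.sum_add_distrib,
        ← Finset.sum_sub_distrib]
      refine Finset.sum_congr rfl fun i _ => ?_
      simp only [Pi.add_apply, Pi.smul_apply, smul_eq_mul]
      ring
    have h1 := hm ((1-t) • mm + t • θ)
    have h2 := hψ t ht ht1 mm θ
    rw [hQ] at h1
    have h3 : t * ((1/2) * ∑ i, (y i - mm i)^2 + ψ mm + (1/2) * (1-t) * S)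
        ≤ t * ((1/2) * ∑ i, (y i - θ i)^2 + ψ θ) := by nlinarith
    exact (mul_le_mul_iff_right₀ ht).mp h3
  refine le_of_forall_pos_le_add fun ε hε => ?_
  have htpos : 0 < min 1 (2*ε/(S+1)) := lt_min one_pos (by positivity)
  have ht1 : min 1 (2*ε/(S+1)) ≤ 1 := min_le_left _ _
  have hk := key _ htpos ht1
  have : (1/2) * (min 1 (2*ε/(S+1))) * S ≤ ε := by
    have h4 : min 1 (2*ε/(S+1)) ≤ 2*ε/(S+1) := min_le_right _ _
    have h5 : (1/2) * (min 1 (2*ε/(S+1))) * S ≤ (1/2) * (2*ε/(S+1)) * S := by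
      apply mul_le_mul_of_nonneg_right _ hSnn
      linarith
    have h6 : (1/2) * (2*ε/(S+1)) * S ≤ ε := by
      have hq : S / (S+1) ≤ 1 := by
        rw [div_le_one (by linarith)]; linarith
      calc (1/2) * (2*ε/(S+1)) * S = ε * (S/(S+1)) := by ring
        _ ≤ ε * 1 := mul_le_mul_of_nonneg_left hq hε.le
        _ = ε := mul_one ε
    linarith
  linarith

lemma scalar_ineq (κ r s : ℝ) (hκ : 0 ≤ κ) (hr : 0 ≤ r) (hs : 0 ≤ s) :
    (1/2)*(1 - max (1 - κ/r) 0)^2*r^2 + κ*((max (1 - κ/r) 0)*r)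
      ≤ (1/2)*(s-r)^2 + κ*s := by
  rcases eq_or_lt_of_le hr with hr0 | hr0
  · rw [← hr0]
    simp only [div_zero, sub_zero, mul_zero]
    have : max (1:ℝ) 0 = 1 := max_eq_left one_pos.le
    rw [this]
    norm_num
    positivity
  · rcases le_or_gt κ r with hkr | hkr
    · have hc : max (1 - κ/r) 0 = 1 - κ/r := by
        apply max_eq_left
        have : κ/r ≤ 1 := (div_le_one hr0).mpr hkr
        linarith
      rw [hc]
      have hcr : κ/r*r = κ := div_mul_cancel₀ κ (ne_of_gt hr0)
      have h1 : (1 - (1 - κ/r))^2*r^2 = κ^2 := by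
        rw [show (1 - (1 - κ/r)) = κ/r by ring]
        rw [div_pow, div_mul_cancel₀ _ (by positivity : r^2 ≠ 0)]
      have h2 : (1 - κ/r)*r = r - κ := by
        rw [sub_mul, one_mul, hcr]
      nlinarith [sq_nonneg (r - s - κ), h1, h2]
    · have hc : max (1 - κ/r) 0 = 0 := by
        apply max_eq_right
        have : 1 ≤ κ/r := (one_le_div hr0).mpr hkr.le
        linarith
      rw [hc]
      nlinarith [sq_nonneg s, mul_nonneg hs (sub_nonneg.mpr hkr.le)]



set_option maxHeartbeats 1000000 in
/-- soft-scaling solution of the doubly-penalized problem from the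
singly-penalized one, for an arbitrary norm `N` on `ℝᵐ` and matrix `B`. -/
theorem flam_soft_scale_general
    (n m : ℕ) (y : Fin n → ℝ) (lam : ℝ) (hlam : 0 ≤ lam)
    (alpha : ℝ) (halpha : alpha ∈ Set.Icc (0:ℝ) 1)
    (N : (Fin m → ℝ) → ℝ)
    (hN_smul : ∀ (a : ℝ) (x : Fin m → ℝ), N (a • x) = |a| * N x)
    (hN_add : ∀ x z : Fin m → ℝ, N (x + z) ≤ N x + N z)
    (hN_eq_zero : ∀ x : Fin m → ℝ, N x = 0 → x = 0)
    (B : Matrix (Fin m) (Fin n) ℝ)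
    (F : (Fin n → ℝ) → ℝ)
    (hF : F = fun θ => (1/2) * ∑ i, (y i - θ i)^2 + alpha * lam * N (B.mulVec θ))
    (G : (Fin n → ℝ) → ℝ)
    (hG : G = fun θ => (1/2) * ∑ i, (y i - θ i)^2 + alpha * lam * N (B.mulVec θ)
        + (1 - alpha) * lam * Real.sqrt (∑ i, (θ i)^2))
    (θhat : Fin n → ℝ)
    (hθhat : ∀ θ, F θhat ≤ F θ) :
    (∀ θ, G ((max (1 - (1 - alpha) * lam / Real.sqrt (∑ i, (θhat i)^2)) 0) • θhat) ≤ G θ)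
      ∧ ∀ θ, (∀ θ', G θ ≤ G θ') →
        θ = (max (1 - (1 - alpha) * lam / Real.sqrt (∑ i, (θhat i)^2)) 0) • θhat := by
  obtain ⟨ha0, ha1⟩ := halpha
  simp only [hF] at hθhat
  -- basic notations
  set κ : ℝ := (1 - alpha) * lam with hκdef
  have hκ : 0 ≤ κ := mul_nonneg (by linarith) hlam
  set S : ℝ := ∑ i, (θhat i)^2 with hSdef
  have hSnn : 0 ≤ S := Finset.sum_nonneg fun i _ => sq_nonneg _
  set r : ℝ := Real.sqrt S with hrdef
  have hr : 0 ≤ r := Real.sqrt_nonneg _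
  have hr2 : r^2 = S := Real.sq_sqrt hSnn
  set c : ℝ := max (1 - κ / r) 0 with hcdef
  have hc0 : 0 ≤ c := le_max_right _ _
  have hc1 : c ≤ 1 := by
    apply max_le _ zero_le_one
    have : 0 ≤ κ / r := div_nonneg hκ hr
    linarith
  set A : ℝ := ∑ i, (y i - θhat i)^2 with hAdef
  set C : ℝ := ∑ i, (y i - θhat i) * θhat i with hCdef
  set H : ℝ := alpha * lam * N (B.mulVec θhat) with hHdef
  have halnn : 0 ≤ alpha * lam := mul_nonneg ha0 hlam
  -- convexity of the two penalty pieces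
  have hψF : ∀ (t : ℝ), 0 < t → t ≤ 1 → ∀ a b : Fin n → ℝ,
      alpha * lam * N (B.mulVec ((1-t) • a + t • b))
        ≤ (1-t) * (alpha * lam * N (B.mulVec a)) + t * (alpha * lam * N (B.mulVec b)) := by
    intro t ht ht1 a b
    have hmv : B.mulVec ((1-t) • a + t • b) = (1-t) • B.mulVec a + t • B.mulVec b := by
      rw [Matrix.mulVec_add, Matrix.mulVec_smul, Matrix.mulVec_smul]
    have h1 : N (B.mulVec ((1-t) • a + t • b)) ≤ (1-t) * N (B.mulVec a) + t * N (B.mulVec b) := by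
      rw [hmv]
      calc N ((1-t) • B.mulVec a + t • B.mulVec b)
          ≤ N ((1-t) • B.mulVec a) + N (t • B.mulVec b) := hN_add _ _
        _ = (1-t) * N (B.mulVec a) + t * N (B.mulVec b) := by
            rw [hN_smul, hN_smul, abs_of_nonneg (by linarith : (0:ℝ) ≤ 1 - t),
              abs_of_nonneg ht.le]
    nlinarith [mul_le_mul_of_nonneg_left h1 halnn]
  have hψE : ∀ (t : ℝ), 0 < t → t ≤ 1 → ∀ a b : Fin n → ℝ,
      Real.sqrt (∑ i, (((1-t) • a + t • b) i)^2)
        ≤ (1-t) * Real.sqrt (∑ i, (a i)^2) + t * Real.sqrt (∑ i, (b i)^2) := by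
    intro t ht ht1 a b
    calc Real.sqrt (∑ i, (((1-t) • a + t • b) i)^2)
        ≤ Real.sqrt (∑ i, (((1-t) • a) i)^2) + Real.sqrt (∑ i, ((t • b) i)^2) :=
          E_triangle n _ _
      _ = (1-t) * Real.sqrt (∑ i, (a i)^2) + t * Real.sqrt (∑ i, (b i)^2) := by
          rw [E_smul, E_smul, abs_of_nonneg (by linarith : (0:ℝ) ≤ 1 - t), abs_of_nonneg ht.le]
  -- strong convexity inequality for F at θhat
  have hFs := strong_min n y (fun θ => alpha * lam * N (B.mulVec θ)) hψF θhat hθhat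
  -- the ray optimality condition : C ≤ H
  have hsum : ∀ t : ℝ, ∑ i, (y i - t * θhat i)^2 = A - 2*(t-1)*C + (t-1)^2*S := by
    intro t
    calc ∑ i, (y i - t * θhat i)^2
        = ∑ i, ((y i - θhat i)^2 - 2*(t-1)*((y i - θhat i) * θhat i) + (t-1)^2*(θhat i)^2) :=
          Finset.sum_congr rfl fun i _ => by ring
      _ = A - 2*(t-1)*C + (t-1)^2*S := by
          rw [Finset.sum_add_distrib, Finset.sum_sub_distrib, ← Finset.mul_sum, ← Finset.mul_sum,
            hAdef, hCdef, hSdef]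
  have hCH : C ≤ H := by
    have hray : ∀ t : ℝ, 1 < t → C - H ≤ (1/2)*(t-1)*S := by
      intro t ht
      have hopt := hθhat (t • θhat)
      have hqt : ∑ i, (y i - (t • θhat) i)^2 = A - 2*(t-1)*C + (t-1)^2*S := by
        simp only [Pi.smul_apply, smul_eq_mul]
        exact hsum t
      have hNt : N (B.mulVec (t • θhat)) = t * N (B.mulVec θhat) := by
        rw [Matrix.mulVec_smul, hN_smul, abs_of_nonneg (by linarith : (0:ℝ) ≤ t)]
      rw [hqt, hNt] at hopt
      have htpos : 0 < t - 1 := by linarith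
      have hHt : alpha * lam * (t * N (B.mulVec θhat)) = t * H := by rw [hHdef]; ring
      have h3 : (t-1) * (C - (1/2)*(t-1)*S) ≤ (t-1) * H := by nlinarith [hopt, hHt]
      have := (mul_le_mul_iff_right₀ htpos).mp h3
      linarith
    refine sub_nonpos.mp (le_of_forall_pos_le_add fun ε hε => ?_)
    have h1 := hray (1 + 2*ε/(S+1))
      (by have : 0 < 2*ε/(S+1) := by positivity
          linarith)
    have h2 : (1/2)*((1 + 2*ε/(S+1))-1)*S ≤ ε := by
      have hq : S / (S+1) ≤ 1 := by
        rw [div_le_one (by linarith)]; linarith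
      calc (1/2)*((1 + 2*ε/(S+1))-1)*S = ε * (S/(S+1)) := by ring
        _ ≤ ε * 1 := mul_le_mul_of_nonneg_left hq hε.le
        _ = ε := mul_one ε
    linarith
  -- key computations about the candidate point
  have hq1 : ∑ i, (y i - (c • θhat) i)^2 = A - 2*(c-1)*C + (c-1)^2*S := by
    simp only [Pi.smul_apply, smul_eq_mul]
    exact hsum c
  have hq2 : N (B.mulVec (c • θhat)) = c * N (B.mulVec θhat) := by
    rw [Matrix.mulVec_smul, hN_smul, abs_of_nonneg hc0]
  have hq3 : Real.sqrt (∑ i, ((c • θhat) i)^2) = c * r := by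
    rw [E_smul, abs_of_nonneg hc0, ← hSdef, ← hrdef]
  clear_value κ S r c A C H
  -- existence
  have hexist : ∀ θ, G (c • θhat) ≤ G θ := by
    intro θ
    simp only [hG]
    rw [hq1, hq2, hq3]
    set s : ℝ := Real.sqrt (∑ i, (θ i)^2) with hsdef
    have hs : 0 ≤ s := Real.sqrt_nonneg _
    set D : ℝ := ∑ i, (θ i - θhat i)^2 with hDdef
    clear_value s D
    have hDnn : 0 ≤ D := by
      rw [hDdef]; exact Finset.sum_nonneg fun i _ => sq_nonneg _
    have hD : (s - r)^2 ≤ D := by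
      have h1 := E_sub_abs n θ θhat
      rw [← hSdef, ← hrdef, ← hsdef] at h1
      have h2 : ∑ i, ((θ - θhat) i)^2 = D := by
        rw [hDdef]; exact Finset.sum_congr rfl fun i _ => by rw [Pi.sub_apply]
      rw [h2] at h1
      calc (s - r)^2 = |s - r|^2 := (sq_abs _).symm
        _ ≤ (Real.sqrt D)^2 := by
            apply pow_le_pow_left₀ (abs_nonneg _) h1
        _ = D := Real.sq_sqrt hDnn
    have hFs' := hFs θ
    have hsc := scalar_ineq κ r s hκ hr hs
    rw [← hcdef, hr2] at hsc
    have hprod : 0 ≤ (1 - c) * (H - C) :=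
      mul_nonneg (by linarith) (by linarith)
    rw [← hAdef, ← hDdef, ← hHdef] at hFs'
    have hHc : alpha * lam * (c * N (B.mulVec θhat)) = c * H := by rw [hHdef]; ring
    linarith [hFs', hsc, hD, hprod, hHc]
  refine ⟨hexist, ?_⟩
  -- uniqueness
  intro θ hθ
  have hGmin : ∀ θ', (1/2) * ∑ i, (y i - (c • θhat) i)^2
      + ((fun θ' => alpha * lam * N (B.mulVec θ') + κ * Real.sqrt (∑ i, (θ' i)^2)) (c • θhat))
      ≤ (1/2) * ∑ i, (y i - θ' i)^2
      + ((fun θ'' => alpha * lam * N (B.mulVec θ'') + κ * Real.sqrt (∑ i, (θ'' i)^2)) θ') := by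
    intro θ'
    have := hexist θ'
    simp only [hG] at this
    simp only
    linarith
  have hψG : ∀ (t : ℝ), 0 < t → t ≤ 1 → ∀ a b : Fin n → ℝ,
      (fun θ' => alpha * lam * N (B.mulVec θ') + κ * Real.sqrt (∑ i, (θ' i)^2)) ((1-t) • a + t • b)
        ≤ (1-t) * ((fun θ' => alpha * lam * N (B.mulVec θ') + κ * Real.sqrt (∑ i, (θ' i)^2)) a)
          + t * ((fun θ' => alpha * lam * N (B.mulVec θ') + κ * Real.sqrt (∑ i, (θ' i)^2)) b) := by
    intro t ht ht1 a b
    simp only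
    have h1 := hψF t ht ht1 a b
    have h2 := hψE t ht ht1 a b
    linarith [h1, mul_le_mul_of_nonneg_left h2 hκ]
  have hGs := strong_min n y
    (fun θ' => alpha * lam * N (B.mulVec θ') + κ * Real.sqrt (∑ i, (θ' i)^2))
    hψG (c • θhat) hGmin θ
  have hle : G θ ≤ G (c • θhat) := hθ (c • θhat)
  simp only [hG] at hle
  have hzero : ∑ i, (θ i - (c • θhat) i)^2 ≤ 0 := by linarith
  have hzero' : ∑ i, (θ i - (c • θhat) i)^2 = 0 :=
    le_antisymm hzero (Finset.sum_nonneg fun i _ => sq_nonneg _)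
  funext i
  have := (Finset.sum_eq_zero_iff_of_nonneg fun j (_ : j ∈ Finset.univ) => sq_nonneg (θ j - (c • θhat) j)).mp hzero' i (Finset.mem_univ i)
  have h5 : θ i - (c • θhat) i = 0 := by
    exact pow_eq_zero_iff (n := 2) (by norm_num) |>.mp this
  linarith [h5]
end

section
/- Let y ∈ ℝⁿ, λ ≥ 0, α ∈ [0,1], and let D ∈ ℝ^{(n−1)×n} be the discrete first-difference matrix with D_{i,i} = 1, D_{i,i+1} = −1 and zeros elsewhere. Let θ̂ minimize (1/2)‖y − θ‖₂² + αλ‖Dθ‖₁. Then max(1 − (1−α)λ/‖θ̂‖₂, 0) · θ̂ minimizes (1/2)‖y − θ‖₂² + αλ‖Dθ‖₁ + (1−α)λ‖θ‖₂. -/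
open Finset

/-- The discrete first-difference matrix `D ∈ ℝ^{(n-1)×n}`:
`D i i = 1`, `D i (i+1) = -1`, zeros elsewhere. -/
def diffMatrix (n : ℕ) : Matrix (Fin (n-1)) (Fin n) ℝ :=
  fun i j => if (j : ℕ) = (i : ℕ) then 1 else if (j : ℕ) = (i : ℕ) + 1 then -1 else 0

/-- soft-scaling for the fused lasso penalty. -/
theorem flam_soft_scale_fused
    (n : ℕ) (y : Fin n → ℝ) (lam : ℝ) (hlam : 0 ≤ lam)
    (alpha : ℝ) (halpha : alpha ∈ Set.Icc (0:ℝ) 1)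
    (F : (Fin n → ℝ) → ℝ)
    (hF : F = fun θ => (1/2) * ∑ i, (y i - θ i)^2
        + alpha * lam * ∑ i, |((diffMatrix n).mulVec θ) i|)
    (G : (Fin n → ℝ) → ℝ)
    (hG : G = fun θ => (1/2) * ∑ i, (y i - θ i)^2
        + alpha * lam * ∑ i, |((diffMatrix n).mulVec θ) i|
        + (1 - alpha) * lam * Real.sqrt (∑ i, (θ i)^2))
    (θhat : Fin n → ℝ)
    (hθhat : ∀ θ, F θhat ≤ F θ) :
    ∀ θ, G ((max (1 - (1 - alpha) * lam / Real.sqrt (∑ i, (θhat i)^2)) 0) • θhat) ≤ G θ := by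
  obtain ⟨ha0, ha1⟩ := halpha
  subst hF hG
  set A := diffMatrix n with hA
  set μ := (1 - alpha) * lam with hμ
  have hμ0 : 0 ≤ μ := mul_nonneg (by linarith) hlam
  have hal : 0 ≤ alpha * lam := mul_nonneg ha0 hlam
  -- Subgradient inequality at the minimizer
  have star : ∀ θ : Fin n → ℝ,
      ∑ i, (y i - θhat i) * (θ i - θhat i)
        ≤ alpha * lam * ∑ j, |A.mulVec θ j| - alpha * lam * ∑ j, |A.mulVec θhat j| := by
    intro θ
    have key : ∀ t : ℝ, 0 < t → t ≤ 1 →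
        ∑ i, (y i - θhat i) * (θ i - θhat i)
          ≤ t * ((1/2) * ∑ i, (θ i - θhat i)^2)
            + (alpha * lam * ∑ j, |A.mulVec θ j| - alpha * lam * ∑ j, |A.mulVec θhat j|) := by
      intro t ht0 ht1
      have h := hθhat (fun i => θhat i + t * (θ i - θhat i))
      dsimp only at h
      have hveq : (fun i => θhat i + t * (θ i - θhat i)) = θhat + t • (θ - θhat) := by
        funext i; simp
      have hmv : ∀ j, A.mulVec (θhat + t • (θ - θhat)) j
          = A.mulVec θhat j + t * (A.mulVec θ j - A.mulVec θhat j) := by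
        intro j
        rw [Matrix.mulVec_add, Matrix.mulVec_smul, Matrix.mulVec_sub]
        simp
      have hsum : ∑ j, |A.mulVec (fun i => θhat i + t * (θ i - θhat i)) j|
          ≤ (1-t) * ∑ j, |A.mulVec θhat j| + t * ∑ j, |A.mulVec θ j| := by
        rw [Finset.mul_sum, Finset.mul_sum, ← Finset.sum_add_distrib]
        apply Finset.sum_le_sum
        intro j _
        rw [hveq, hmv j]
        have hh : A.mulVec θhat j + t*(A.mulVec θ j - A.mulVec θhat j)
            = (1-t)*(A.mulVec θhat j) + t*(A.mulVec θ j) := by ring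
        rw [hh]
        calc |(1-t)*(A.mulVec θhat j) + t*(A.mulVec θ j)|
            ≤ |(1-t)*(A.mulVec θhat j)| + |t*(A.mulVec θ j)| := abs_add_le _ _
          _ = (1-t)*|A.mulVec θhat j| + t*|A.mulVec θ j| := by
              rw [abs_mul, abs_mul, abs_of_nonneg (by linarith : (0:ℝ) ≤ 1-t),
                abs_of_nonneg ht0.le]
      have hpen : alpha * lam * ∑ j, |A.mulVec (fun i => θhat i + t * (θ i - θhat i)) j|
          ≤ (1-t) * (alpha * lam * ∑ j, |A.mulVec θhat j|)
            + t * (alpha * lam * ∑ j, |A.mulVec θ j|) := by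
        calc alpha * lam * ∑ j, |A.mulVec (fun i => θhat i + t * (θ i - θhat i)) j|
            ≤ alpha * lam * ((1-t) * ∑ j, |A.mulVec θhat j| + t * ∑ j, |A.mulVec θ j|) :=
              mul_le_mul_of_nonneg_left hsum hal
          _ = (1-t) * (alpha * lam * ∑ j, |A.mulVec θhat j|)
              + t * (alpha * lam * ∑ j, |A.mulVec θ j|) := by ring
      have expand : ∑ i, (y i - (θhat i + t * (θ i - θhat i)))^2
          = ∑ i, (y i - θhat i)^2 - 2*t*(∑ i, (y i - θhat i)*(θ i - θhat i))
            + t^2 * (∑ i, (θ i - θhat i)^2) := by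
        rw [Finset.mul_sum, Finset.mul_sum, ← Finset.sum_sub_distrib, ← Finset.sum_add_distrib]
        exact Finset.sum_congr rfl fun i _ => by ring
      nlinarith [h, expand, hpen, ht0]
    by_contra hcon
    push_neg at hcon
    set I1 := ∑ i, (y i - θhat i) * (θ i - θhat i) with hI1
    set Δ := alpha * lam * ∑ j, |A.mulVec θ j| - alpha * lam * ∑ j, |A.mulVec θhat j| with hΔ
    set K := (1/2) * ∑ i, (θ i - θhat i)^2 with hK
    have hK0 : 0 ≤ K := by
      rw [hK]; positivity
    have ha : 0 < I1 - Δ := by linarith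
    have hx : 0 < (I1 - Δ)/(K+1) := div_pos ha (by linarith)
    have ht := key (min 1 ((I1-Δ)/(K+1))) (lt_min one_pos hx) (min_le_left _ _)
    have h1 : (min 1 ((I1-Δ)/(K+1))) * K ≤ ((I1-Δ)/(K+1)) * K :=
      mul_le_mul_of_nonneg_right (min_le_right _ _) hK0
    have h2 : ((I1-Δ)/(K+1)) * (K+1) = I1 - Δ := div_mul_cancel₀ _ (by linarith)
    linarith
  -- Equality in the radial direction
  have hE : ∑ i, (y i - θhat i) * θhat i = alpha * lam * ∑ j, |A.mulVec θhat j| := by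
    have h2 := star (fun i => 2 * θhat i)
    have h0 := star (fun _ => (0:ℝ))
    have e2 : ∑ i, (y i - θhat i) * (2 * θhat i - θhat i) = ∑ i, (y i - θhat i) * θhat i :=
      Finset.sum_congr rfl fun i _ => by ring
    have e0 : ∑ i, (y i - θhat i) * ((0:ℝ) - θhat i) = -∑ i, (y i - θhat i) * θhat i := by
      rw [← Finset.sum_neg_distrib]; exact Finset.sum_congr rfl fun i _ => by ring
    have p2 : alpha * lam * ∑ j, |A.mulVec (fun i => 2 * θhat i) j|
        = 2 * (alpha * lam * ∑ j, |A.mulVec θhat j|) := by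
      have hv : (fun i => 2 * θhat i) = (2:ℝ) • θhat := by funext i; simp
      rw [hv, Matrix.mulVec_smul]
      simp only [Pi.smul_apply, smul_eq_mul, abs_mul, abs_two]
      rw [← Finset.mul_sum]; ring
    have p0 : alpha * lam * ∑ j, |A.mulVec (fun _ : Fin n => (0:ℝ)) j| = 0 := by
      have hv : (fun _ : Fin n => (0:ℝ)) = (0 : Fin n → ℝ) := rfl
      rw [hv, Matrix.mulVec_zero]
      simp
    rw [e2, p2] at h2
    rw [e0, p0] at h0
    linarith
  -- main argument
  intro θ
  dsimp only
  set r := Real.sqrt (∑ i, (θhat i)^2) with hr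
  set Nt := Real.sqrt (∑ i, (θ i)^2) with hNt
  set c := max (1 - μ / r) 0 with hc
  have hr0 : 0 ≤ r := by rw [hr]; positivity
  have hNt0 : 0 ≤ Nt := by rw [hNt]; positivity
  have hc0 : 0 ≤ c := le_max_right _ _
  have hc1 : c ≤ 1 := by
    apply max_le _ zero_le_one
    have : 0 ≤ μ / r := div_nonneg hμ0 hr0
    linarith
  have hr2 : r^2 = ∑ i, (θhat i)^2 := by
    rw [hr]; exact Real.sq_sqrt (by positivity)
  have hCS : ∑ i, θhat i * θ i ≤ r * Nt := by
    have h1 := Finset.sum_mul_sq_le_sq_mul_sq Finset.univ θhat θ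
    calc ∑ i, θhat i * θ i ≤ |∑ i, θhat i * θ i| := le_abs_self _
      _ = Real.sqrt ((∑ i, θhat i * θ i)^2) := (Real.sqrt_sq_eq_abs _).symm
      _ ≤ Real.sqrt ((∑ i, (θhat i)^2) * ∑ i, (θ i)^2) := Real.sqrt_le_sqrt h1
      _ = r * Nt := by rw [Real.sqrt_mul (by positivity) _, hr, hNt]
  have hCSm : (1-c) * (∑ i, θhat i * θ i) ≤ (1-c) * (r * Nt) :=
    mul_le_mul_of_nonneg_left hCS (by linarith)
  have hfact : (Nt - c*r) * ((1-c)*r - μ) ≤ 0 := by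
    rcases le_or_gt r μ with hcase | hcase
    · rcases eq_or_lt_of_le hr0 with h0 | h0
      · rw [← h0]
        nlinarith [mul_nonneg hNt0 hμ0]
      · have hcz : c = 0 := by
          apply max_eq_right
          have : 1 ≤ μ / r := (one_le_div h0).2 hcase
          linarith
        rw [hcz]
        nlinarith [mul_nonneg hNt0 (sub_nonneg.2 hcase)]
    · have hrpos : 0 < r := lt_of_le_of_lt hμ0 hcase
      have hcv : c = 1 - μ / r := by
        apply max_eq_left
        have : μ / r ≤ 1 := (div_le_one hrpos).2 hcase.le
        linarith
      have hq : (1 - c) * r = μ := by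
        rw [hcv]; field_simp; ring
      rw [hq]
      simp
  have hPc : alpha * lam * ∑ j, |A.mulVec (c • θhat) j|
      = c * (alpha * lam * ∑ j, |A.mulVec θhat j|) := by
    rw [Matrix.mulVec_smul]
    simp only [Pi.smul_apply, smul_eq_mul, abs_mul, abs_of_nonneg hc0]
    rw [← Finset.mul_sum]; ring
  have hNc : Real.sqrt (∑ i, (c * θhat i)^2) = c * r := by
    rw [hr, show ∑ i, (c*θhat i)^2 = c^2 * ∑ i, (θhat i)^2 by
        rw [Finset.mul_sum]; exact Finset.sum_congr rfl fun i _ => by ring,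
      Real.sqrt_mul (sq_nonneg c), Real.sqrt_sq hc0]
  have hQ : (0:ℝ) ≤ ∑ i, (θ i - c*θhat i)^2 := Finset.sum_nonneg fun i _ => sq_nonneg _
  have hbig : ∑ i, (y i - θ i)^2
      = ∑ i, (y i - c*θhat i)^2 + ∑ i, (θ i - c*θhat i)^2
        - 2*(∑ i, (y i - θhat i)*(θ i - θhat i))
        - (2*(1-c))*(∑ i, (y i - θhat i)*θhat i)
        - (2*(1-c))*(∑ i, θhat i * θ i)
        + (2*(c*(1-c)))*(∑ i, (θhat i)^2) := by
    rw [Finset.mul_sum, Finset.mul_sum, Finset.mul_sum, Finset.mul_sum,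
      ← Finset.sum_add_distrib, ← Finset.sum_sub_distrib, ← Finset.sum_sub_distrib,
      ← Finset.sum_sub_distrib, ← Finset.sum_add_distrib]
    exact Finset.sum_congr rfl fun i _ => by ring
  rw [hE, ← hr2] at hbig
  simp only [Pi.smul_apply, smul_eq_mul]
  rw [hPc, hNc, hbig]
  have hstar := star θ
  linarith [hstar, hCSm, hfact, hQ]
end

section
/- Chi-squared upper tail bound: if X follows a chi-squared distribution with n degrees of freedom, then for all x ≥ 0, P(X ≥ n + 2√(nx) + 2x) ≤ e^{−x}. -/
open MeasureTheory ProbabilityTheory Finset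
open Real



lemma gaussianReal_repr : gaussianReal 0 1 =
    volume.withDensity (fun x => ((Real.toNNReal (gaussianPDFReal 0 1 x)) : ENNReal)) := by
  rw [gaussianReal_of_var_ne_zero _ one_ne_zero]
  rfl

lemma pdf_pt (t : ℝ) (x : ℝ) :
    (Real.toNNReal (gaussianPDFReal 0 1 x)) • Real.exp (t * x^2)
      = (Real.sqrt (2*π))⁻¹ * Real.exp (-(1/2 - t) * x^2) := by
  rw [NNReal.smul_def, Real.coe_toNNReal _ (gaussianPDFReal_nonneg _ _ _)]
  simp only [gaussianPDFReal, NNReal.coe_one, mul_one, sub_zero]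
  rw [smul_eq_mul, mul_assoc, ← Real.exp_add]
  congr 1
  ring

lemma integrable_exp_mul_sq_gaussian {t : ℝ} (ht : t < 1/2) :
    Integrable (fun x => Real.exp (t * x^2)) (gaussianReal 0 1) := by
  have hb : 0 < 1/2 - t := by linarith
  rw [gaussianReal_repr,
    integrable_withDensity_iff_integrable_smul ((measurable_gaussianPDFReal 0 1).real_toNNReal)]
  simp_rw [pdf_pt t]
  exact (integrable_exp_neg_mul_sq hb).const_mul _

lemma integral_exp_mul_sq_gaussian {t : ℝ} (ht : t < 1/2) :
    ∫ x, Real.exp (t * x^2) ∂(gaussianReal 0 1) = (Real.sqrt (1 - 2*t))⁻¹ := by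
  have hb : 0 < 1/2 - t := by linarith
  rw [gaussianReal_repr,
    integral_withDensity_eq_integral_smul ((measurable_gaussianPDFReal 0 1).real_toNNReal)]
  simp_rw [pdf_pt t]
  rw [MeasureTheory.integral_const_mul, integral_gaussian]
  rw [← Real.sqrt_inv, ← Real.sqrt_mul (by positivity), ← Real.sqrt_inv]
  congr 1
  have hπ := Real.pi_pos
  rw [eq_comm, inv_eq_iff_eq_inv]
  field_simp


lemma iIndepFun_congr' {ι Ω : Type*} [MeasurableSpace Ω] {P : Measure Ω} {f g : ι → Ω → ℝ}
    (h : iIndepFun f P)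
    (hfg : ∀ i, f i =ᵐ[P] g i) :
    iIndepFun g P := by
  rw [iIndepFun_iff_measure_inter_preimage_eq_mul] at h ⊢
  intro S sets hsets
  have hpre : ∀ i : ι, (f i ⁻¹' sets i : Set Ω) =ᵐ[P] (g i ⁻¹' sets i : Set Ω) := by
    intro i
    filter_upwards [hfg i] with ω hω
    show (f i ω ∈ sets i) = (g i ω ∈ sets i)
    rw [hω]
  have h1 : (⋂ i ∈ S, f i ⁻¹' sets i : Set Ω) =ᵐ[P] (⋂ i ∈ S, g i ⁻¹' sets i : Set Ω) := by
    have := fun i (_ : i ∈ (S : Set ι)) => hpre i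
    exact EventuallyEq.countable_bInter S.countable_toSet this
  rw [← measure_congr h1, h S hsets]
  exact Finset.prod_congr rfl fun i _ => measure_congr (hpre i)

lemma lm_numeric (n : ℕ) (hn : 0 < n) {x a t : ℝ} (hx : 0 < x)
    (ha : a = n + 2 * Real.sqrt (n * x) + 2 * x)
    (ht : t = (1 - n / a) / 2) :
    Real.exp (-t * a) * ((Real.sqrt (1 - 2 * t))⁻¹) ^ n ≤ Real.exp (-x) := by
  have hn' : (0:ℝ) < n := by exact_mod_cast hn
  have hs : 0 ≤ Real.sqrt (n * x) := Real.sqrt_nonneg _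
  have ha' : 0 < a := by rw [ha]; positivity
  have h1 : 1 - 2 * t = n / a := by rw [ht]; ring
  have h2 : t * a = (a - n) / 2 := by
    rw [ht]; field_simp
  have hta : t * a = Real.sqrt (n * x) + x := by
    rw [h2, ha]; ring
  have hinv : (Real.sqrt (1 - 2 * t))⁻¹ = Real.sqrt (a / n) := by
    rw [h1, ← Real.sqrt_inv, inv_div]
  set u := Real.sqrt (x / n) with hu_def
  have hu : 0 ≤ u := Real.sqrt_nonneg _
  have hu2 : u ^ 2 = x / n := Real.sq_sqrt (by positivity)
  have hun : Real.sqrt (n * x) = n * u := by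
    rw [← Real.sqrt_sq (by positivity : (0:ℝ) ≤ (n:ℝ) * u)]
    congr 1
    rw [mul_pow, hu2]; field_simp
  have hxu : x = n * u ^ 2 := by rw [hu2]; field_simp
  have haun : a / n = 1 + 2 * u + 2 * u ^ 2 := by
    rw [ha, hun, hxu]; field_simp
  have hq : a / n ≤ Real.exp u ^ 2 := by
    rw [haun]
    have h3 := Real.quadratic_le_exp_of_nonneg hu
    nlinarith [Real.exp_pos u, sq_nonneg u, pow_nonneg hu 3, pow_nonneg hu 4]
  have key : Real.sqrt (a / n) ^ n ≤ Real.exp (Real.sqrt (n * x)) := by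
    have h4 : Real.sqrt (a / n) ≤ Real.exp u := by
      rw [← Real.sqrt_sq (Real.exp_pos u).le]
      exact Real.sqrt_le_sqrt hq
    calc Real.sqrt (a / n) ^ n ≤ Real.exp u ^ n :=
          pow_le_pow_left₀ (Real.sqrt_nonneg _) h4 n
      _ = Real.exp (n * u) := (Real.exp_nat_mul u n).symm
      _ = Real.exp (Real.sqrt (n * x)) := by rw [hun]
  rw [hinv]
  calc Real.exp (-t * a) * Real.sqrt (a / n) ^ n
      ≤ Real.exp (-t * a) * Real.exp (Real.sqrt (n * x)) := by
        exact mul_le_mul_of_nonneg_left key (Real.exp_pos _).le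
    _ = Real.exp (-x) := by
        rw [← Real.exp_add]; congr 1; rw [neg_mul, hta]; ring


/-- Laurent–Massart: if `X = ∑ᵢ Zᵢ²` with `Z₁,…,Zₙ` i.i.d.
standard Gaussians (so `X ∼ χ²_n`), then for all `x ≥ 0`,
`P(X ≥ n + 2√(nx) + 2x) ≤ e^{-x}`. -/
theorem chi_squared_tail_bound
    {Ω : Type*} [MeasurableSpace Ω] (P : Measure Ω) [IsProbabilityMeasure P]
    (n : ℕ) (Z : Fin n → Ω → ℝ)
    (hindep : iIndepFun Z P)
    (hgauss : ∀ i : Fin n, Measure.map (Z i) P = gaussianReal 0 1)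
    (X : Ω → ℝ) (hX : X = fun ω => ∑ i, (Z i ω)^2) :
    ∀ x : ℝ, 0 ≤ x →
      P {ω | (n : ℝ) + 2 * Real.sqrt (n * x) + 2 * x ≤ X ω}
        ≤ ENNReal.ofReal (Real.exp (-x)) := by
  intro x hx
  have hprob : ∀ i, AEMeasurable (Z i) P := by
    intro i
    by_contra hc
    have h0 : Measure.map (Z i) P = 0 := Measure.map_of_not_aemeasurable hc
    rw [hgauss i] at h0
    have h1 : (gaussianReal 0 1 : Measure ℝ) Set.univ = 1 := measure_univ
    rw [h0] at h1
    simp at h1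
  rcases eq_or_lt_of_le hx with rfl | hx'
  · simpa using prob_le_one
  set W : Fin n → Ω → ℝ := fun i => (hprob i).mk (Z i) with hW_def
  have hWmeas : ∀ i, Measurable (W i) := fun i => (hprob i).measurable_mk
  have hZW : ∀ i, Z i =ᵐ[P] W i := fun i => (hprob i).ae_eq_mk
  have hmapW : ∀ i, P.map (W i) = gaussianReal 0 1 := fun i => by
    rw [← Measure.map_congr (hZW i), hgauss i]
  have hindepW := iIndepFun_congr' hindep hZW
  set Y : Fin n → Ω → ℝ := fun i ω => (W i ω)^2 with hY_def
  have hYmeas : ∀ i, Measurable (Y i) := fun i => (hWmeas i).pow_const 2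
  have hindepY : iIndepFun Y P :=
    hindepW.comp (fun _ => fun z : ℝ => z^2) (fun _ => measurable_id.pow_const 2)
  rcases Nat.eq_zero_or_pos n with hn0 | hn
  · subst hn0
    have hempty : {ω | ((0:ℕ):ℝ) + 2 * Real.sqrt (((0:ℕ):ℝ) * x) + 2 * x ≤ X ω} = ∅ := by
      ext ω
      simp only [Set.mem_setOf_eq, Set.mem_empty_iff_false, iff_false, not_le, hX,
        Nat.cast_zero, zero_mul, Real.sqrt_zero, mul_zero, zero_add]
      have : ∑ i : Fin 0, (Z i ω)^2 = 0 := by simp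
      rw [this]
      linarith
    rw [hempty]
    simp
  set a : ℝ := (n : ℝ) + 2 * Real.sqrt (n * x) + 2 * x with ha_def
  set t : ℝ := (1 - n / a) / 2 with ht_def
  have hn' : (0:ℝ) < n := by exact_mod_cast hn
  have ha' : 0 < a := by rw [ha_def]; positivity
  have hna : (n:ℝ) / a < 1 := by
    rw [div_lt_one ha', ha_def]
    nlinarith [Real.sqrt_nonneg ((n:ℝ) * x)]
  have hna0 : 0 < (n:ℝ) / a := by positivity
  have ht0 : 0 ≤ t := by rw [ht_def]; linarith
  have ht2 : t < 1/2 := by rw [ht_def]; linarith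
  have h_int : ∀ i, Integrable (fun ω => Real.exp (t * Y i ω)) P := by
    intro i
    have h1 : Integrable (fun z => Real.exp (t * z^2)) (P.map (W i)) := by
      rw [hmapW i]; exact integrable_exp_mul_sq_gaussian ht2
    exact (integrable_map_measure
      (Continuous.aestronglyMeasurable (by continuity)) (hWmeas i).aemeasurable).mp h1
  have h_mgf : ∀ i, mgf (Y i) P t = (Real.sqrt (1 - 2*t))⁻¹ := by
    intro i
    have h2 : ∫ z, Real.exp (t * z^2) ∂(P.map (W i))
        = ∫ ω, Real.exp (t * (W i ω)^2) ∂P :=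
      integral_map (hWmeas i).aemeasurable (Continuous.aestronglyMeasurable (by continuity))
    have h3 : mgf (Y i) P t = ∫ ω, Real.exp (t * (W i ω)^2) ∂P := rfl
    rw [h3, ← h2, hmapW i]
    exact integral_exp_mul_sq_gaussian ht2
  have hsum_mgf : mgf (∑ i, Y i) P t = ((Real.sqrt (1 - 2*t))⁻¹)^n := by
    rw [hindepY.mgf_sum hYmeas Finset.univ]
    rw [Finset.prod_congr rfl (fun i _ => h_mgf i)]
    simp [Finset.prod_const, Finset.card_univ]
  have h_int_sum : Integrable (fun ω => Real.exp (t * (∑ i, Y i) ω)) P :=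
    hindepY.integrable_exp_mul_sum hYmeas (fun i _ => h_int i)
  have hch := measure_ge_le_exp_mul_mgf (μ := P) (X := ∑ i, Y i) a ht0 h_int_sum
  rw [hsum_mgf] at hch
  have hXae : X =ᵐ[P] (∑ i, Y i) := by
    have hall : ∀ᵐ ω ∂P, ∀ i, Z i ω = W i ω := ae_all_iff.mpr hZW
    filter_upwards [hall] with ω hω
    rw [hX]
    simp only [Finset.sum_apply]
    exact Finset.sum_congr rfl fun i _ => by rw [hY_def, hω i]
  have hsets : P {ω | a ≤ X ω} = P {ω | a ≤ (∑ i, Y i) ω} := by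
    apply measure_congr
    filter_upwards [hXae] with ω hω
    show (a ≤ X ω) = (a ≤ (∑ i, Y i) ω)
    rw [hω]
  rw [hsets, ENNReal.le_ofReal_iff_toReal_le (measure_ne_top P _) (Real.exp_pos _).le]
  calc (P {ω | a ≤ (∑ i, Y i) ω}).toReal
      ≤ Real.exp (-t * a) * ((Real.sqrt (1 - 2*t))⁻¹)^n := hch
    _ ≤ Real.exp (-x) := lm_numeric n hn hx' ha_def ht_def
end

section
/- Dual of the generalized fused-lasso problem: for y ∈ ℝⁿ, B ∈ ℝ^{m×n}, a norm ‖·‖ on ℝᵐ with dual norm ‖·‖_*, and μ ≥ 0, the minimizer θ̂ of (1/2)‖y − θ‖₂² + μ‖Bθ‖ satisfies θ̂ = y − Bᵀv̂, where v̂ ∈ argmin_{‖v‖_* ≤ μ} ‖y − Bᵀv‖₂². -/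
open Finset

lemma fldAux_N0 {m : ℕ} {N : (Fin m → ℝ) → ℝ}
    (hN_smul : ∀ (a : ℝ) (x : Fin m → ℝ), N (a • x) = |a| * N x) : N 0 = 0 := by
  have h := hN_smul 0 0
  simpa using h

lemma fldAux_nonneg {m : ℕ} {N : (Fin m → ℝ) → ℝ}
    (hN_smul : ∀ (a : ℝ) (x : Fin m → ℝ), N (a • x) = |a| * N x)
    (hN_add : ∀ x z : Fin m → ℝ, N (x + z) ≤ N x + N z) (x : Fin m → ℝ) : 0 ≤ N x := by
  have h1 : N (-x) = N x := by
    have := hN_smul (-1) x; simpa using this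
  have h := hN_add x (-x)
  rw [add_neg_cancel, fldAux_N0 hN_smul, h1] at h
  linarith

lemma fldAux_sum {m : ℕ} {N : (Fin m → ℝ) → ℝ}
    (hN_smul : ∀ (a : ℝ) (x : Fin m → ℝ), N (a • x) = |a| * N x)
    (hN_add : ∀ x z : Fin m → ℝ, N (x + z) ≤ N x + N z)
    {ι : Type*} (s : Finset ι) (f : ι → (Fin m → ℝ)) :
    N (∑ a ∈ s, f a) ≤ ∑ a ∈ s, N (f a) := by
  classical
  induction s using Finset.induction with
  | empty => simp [fldAux_N0 hN_smul]
  | @insert _ _ h ih =>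
      rw [Finset.sum_insert h, Finset.sum_insert h]
      exact le_trans (hN_add _ _) (by linarith)

/-- bound `N z ≤ K * ‖z‖` with `K = ∑ N (eₐ)`. -/
lemma fldAux_upper {m : ℕ} {N : (Fin m → ℝ) → ℝ}
    (hN_smul : ∀ (a : ℝ) (x : Fin m → ℝ), N (a • x) = |a| * N x)
    (hN_add : ∀ x z : Fin m → ℝ, N (x + z) ≤ N x + N z) (z : Fin m → ℝ) :
    N z ≤ (∑ a, N (fun j => if a = j then 1 else 0)) * ‖z‖ := by
  have hz := pi_eq_sum_univ z
  calc N z = N (∑ a, z a • fun j => if a = j then (1:ℝ) else 0) := by rw [← hz]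
    _ ≤ ∑ a, N (z a • fun j => if a = j then (1:ℝ) else 0) := fldAux_sum hN_smul hN_add _ _
    _ ≤ ∑ a, N (fun j => if a = j then (1:ℝ) else 0) * ‖z‖ := by
        refine Finset.sum_le_sum fun a _ => ?_
        rw [hN_smul]
        have h1 : |z a| ≤ ‖z‖ := by
          have := norm_le_pi_norm z a
          simpa [Real.norm_eq_abs] using this
        have h2 : 0 ≤ N (fun j => if a = j then (1:ℝ) else 0) :=
          fldAux_nonneg hN_smul hN_add _
        nlinarith
    _ = _ := by rw [← Finset.sum_mul]

lemma fldAux_cont {m : ℕ} {N : (Fin m → ℝ) → ℝ}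
    (hN_smul : ∀ (a : ℝ) (x : Fin m → ℝ), N (a • x) = |a| * N x)
    (hN_add : ∀ x z : Fin m → ℝ, N (x + z) ≤ N x + N z) : Continuous N := by
  set K : ℝ := ∑ a, N (fun j => if a = j then (1:ℝ) else 0) with hK
  have hK0 : 0 ≤ K := Finset.sum_nonneg fun a _ => fldAux_nonneg hN_smul hN_add _
  have : LipschitzWith (Real.toNNReal K) N := by
    apply LipschitzWith.of_dist_le_mul
    intro x y
    rw [Real.dist_eq]
    have hxy : N (x - y) ≤ K * dist x y := by
      have := fldAux_upper hN_smul hN_add (x - y)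
      rw [← dist_eq_norm] at this
      exact this
    have h1 : N x - N y ≤ N (x - y) := by
      have h := hN_add (x - y) y
      rw [sub_add_cancel] at h; linarith
    have h2 : N y - N x ≤ N (x - y) := by
      have h3 := hN_add (y - x) x
      rw [sub_add_cancel] at h3
      have h4 : N (y - x) = N (x - y) := by
        have h5 := hN_smul (-1) (x - y); simpa using h5
      linarith
    rw [Real.coe_toNNReal _ hK0]
    rw [abs_sub_le_iff]
    constructor <;> linarith
  exact this.continuous

/-- lower bound: exists `c > 0` with `‖z‖ ≤ c * N z`. -/
lemma fldAux_equiv {m : ℕ} {N : (Fin m → ℝ) → ℝ}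
    (hN_smul : ∀ (a : ℝ) (x : Fin m → ℝ), N (a • x) = |a| * N x)
    (hN_add : ∀ x z : Fin m → ℝ, N (x + z) ≤ N x + N z)
    (hN_eq_zero : ∀ x : Fin m → ℝ, N x = 0 → x = 0) :
    ∃ c : ℝ, 0 < c ∧ ∀ z : Fin m → ℝ, ‖z‖ ≤ c * N z := by
  rcases Nat.eq_zero_or_pos m with hm | hm
  · subst hm
    refine ⟨1, one_pos, fun z => ?_⟩
    have hz : z = 0 := Subsingleton.elim _ _
    subst hz
    rw [fldAux_N0 hN_smul, norm_zero, mul_zero]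
  · have hne : (Metric.sphere (0 : Fin m → ℝ) 1).Nonempty := by
      refine ⟨Pi.single ⟨0, hm⟩ (1:ℝ), ?_⟩
      rw [Metric.mem_sphere, dist_zero_right, Pi.norm_single, norm_one]
    obtain ⟨z₀, hz₀mem, hz₀min⟩ := (isCompact_sphere (0 : Fin m → ℝ) 1).exists_isMinOn hne
      (fldAux_cont hN_smul hN_add).continuousOn
    have hz₀norm : ‖z₀‖ = 1 := by rwa [Metric.mem_sphere, dist_zero_right] at hz₀mem
    have hz₀ne : z₀ ≠ 0 := by
      intro h; rw [h, norm_zero] at hz₀norm; norm_num at hz₀norm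
    have hc0 : 0 < N z₀ := by
      rcases lt_or_eq_of_le (fldAux_nonneg hN_smul hN_add z₀) with h | h
      · exact h
      · exact absurd (hN_eq_zero z₀ h.symm) hz₀ne
    refine ⟨(N z₀)⁻¹, inv_pos.2 hc0, fun z => ?_⟩
    rcases eq_or_ne z 0 with rfl | hz
    · rw [fldAux_N0 hN_smul, norm_zero, mul_zero]
    · have hr : 0 < ‖z‖ := norm_pos_iff.2 hz
      have hmem : ‖z‖⁻¹ • z ∈ Metric.sphere (0 : Fin m → ℝ) 1 := by
        rw [Metric.mem_sphere, dist_zero_right, norm_smul, norm_inv, norm_norm,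
          inv_mul_cancel₀ hr.ne']
      have hmin : N z₀ ≤ N (‖z‖⁻¹ • z) := hz₀min hmem
      have heq : N (‖z‖⁻¹ • z) = ‖z‖⁻¹ * N z := by
        rw [hN_smul, abs_of_pos (inv_pos.2 hr)]
      rw [heq] at hmin
      rw [le_inv_mul_iff₀ hc0]
      have h2 : ‖z‖ * N z₀ ≤ ‖z‖ * (‖z‖⁻¹ * N z) :=
        mul_le_mul_of_nonneg_left hmin hr.le
      rw [← mul_assoc, mul_inv_cancel₀ hr.ne', one_mul] at h2
      linarith


/-- duality for the generalized fused lasso. For a norm `N` on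
`ℝᵐ` with dual norm `N*(v) = sup{vᵀz : N z ≤ 1}`, if `θ̂` minimizes
`(1/2)‖y - θ‖₂² + μ N(Bθ)` and `v̂` minimizes `‖y - Bᵀv‖₂²` over
`{v : N*(v) ≤ μ}`, then `θ̂ = y - Bᵀv̂`. -/
theorem generalized_fused_dual (n m : ℕ) (y : Fin n → ℝ)
    (B : Matrix (Fin m) (Fin n) ℝ) (μ : ℝ) (hμ : 0 ≤ μ)
    (N : (Fin m → ℝ) → ℝ)
    (hN_smul : ∀ (a : ℝ) (x : Fin m → ℝ), N (a • x) = |a| * N x)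
    (hN_add : ∀ x z : Fin m → ℝ, N (x + z) ≤ N x + N z)
    (hN_eq_zero : ∀ x : Fin m → ℝ, N x = 0 → x = 0)
    (Nstar : (Fin m → ℝ) → ℝ)
    (hNstar : Nstar = fun v => sSup ((fun z => ∑ a, v a * z a) '' {z | N z ≤ 1}))
    (θhat : Fin n → ℝ)
    (hθhat : ∀ θ : Fin n → ℝ,
      (1/2) * ∑ i, (y i - θhat i)^2 + μ * N (B.mulVec θhat)
        ≤ (1/2) * ∑ i, (y i - θ i)^2 + μ * N (B.mulVec θ))
    (vhat : Fin m → ℝ) (hvhat_feas : Nstar vhat ≤ μ)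
    (hvhat : ∀ v : Fin m → ℝ, Nstar v ≤ μ →
      (∑ i, (y i - (B.transpose.mulVec vhat) i)^2)
        ≤ ∑ i, (y i - (B.transpose.mulVec v) i)^2) :
    θhat = y - B.transpose.mulVec vhat := by
  classical
  have hN0 := fldAux_N0 hN_smul
  have hNnn := fldAux_nonneg hN_smul hN_add
  obtain ⟨c, hc, hcle⟩ := fldAux_equiv hN_smul hN_add hN_eq_zero
  set θs : Fin n → ℝ := y - B.transpose.mulVec vhat with hθs
  set w : Fin m → ℝ := B.mulVec θs with hw
  -- pairing identity
  have hpair : ∀ (v : Fin m → ℝ) (θ : Fin n → ℝ),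
      ∑ i, (B.transpose.mulVec v) i * θ i = ∑ a, v a * (B.mulVec θ) a := by
    intro v θ
    simp only [Matrix.mulVec, dotProduct]
    have h1 : ∀ i, (∑ a, B.transpose i a * v a) * θ i = ∑ a, v a * (B a i * θ i) := by
      intro i; rw [Finset.sum_mul]
      exact Finset.sum_congr rfl fun a _ => by rw [Matrix.transpose_apply]; ring
    rw [Finset.sum_congr rfl fun i _ => h1 i, Finset.sum_comm]
    exact Finset.sum_congr rfl fun a _ => by rw [Finset.mul_sum]
  -- bounded above
  have hbdd : ∀ v : Fin m → ℝ, BddAbove ((fun z => ∑ a, v a * z a) '' {z | N z ≤ 1}) := by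
    intro v
    refine ⟨c * ∑ a, |v a|, ?_⟩
    rintro x ⟨z, hz, rfl⟩
    simp only [Set.mem_setOf_eq] at hz
    have hzn : ‖z‖ ≤ c := le_trans (hcle z) (by nlinarith [hNnn z, hz])
    calc ∑ a, v a * z a ≤ ∑ a, |v a| * c := by
          refine Finset.sum_le_sum fun a _ => ?_
          have h1 : |z a| ≤ c :=
            le_trans (by simpa [Real.norm_eq_abs] using norm_le_pi_norm z a) hzn
          calc v a * z a ≤ |v a * z a| := le_abs_self _
            _ = |v a| * |z a| := abs_mul _ _
            _ ≤ |v a| * c := mul_le_mul_of_nonneg_left h1 (abs_nonneg _)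
      _ = c * ∑ a, |v a| := by rw [← Finset.sum_mul]; ring
  have hmem0 : ∀ v : Fin m → ℝ, (0:ℝ) ∈ (fun z => ∑ a, v a * z a) '' {z | N z ≤ 1} :=
    fun v => ⟨0, by simp [Set.mem_setOf_eq, hN0], by simp⟩
  have hle_star : ∀ (v z : Fin m → ℝ), N z ≤ 1 → ∑ a, v a * z a ≤ Nstar v := by
    intro v z hz
    simp only [hNstar]
    exact le_csSup (hbdd v) ⟨z, hz, rfl⟩
  -- Hölder
  have hHolder : ∀ (v z : Fin m → ℝ), ∑ a, v a * z a ≤ Nstar v * N z := by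
    intro v z
    rcases eq_or_lt_of_le (hNnn z) with h | h
    · have hz0 : z = 0 := hN_eq_zero z h.symm
      subst hz0
      simp [hN0]
    · have hmem : N ((N z)⁻¹ • z) ≤ 1 := by
        rw [hN_smul, abs_of_pos (inv_pos.2 h), inv_mul_cancel₀ h.ne']
      have hle := hle_star v _ hmem
      have heq : ∑ a, v a * ((N z)⁻¹ • z) a = (N z)⁻¹ * ∑ a, v a * z a := by
        rw [Finset.mul_sum]
        exact Finset.sum_congr rfl fun a _ => by
          simp only [Pi.smul_apply, smul_eq_mul]; ring
      rw [heq] at hle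
      have h2 := mul_le_mul_of_nonneg_left hle h.le
      rw [← mul_assoc, mul_inv_cancel₀ h.ne', one_mul] at h2
      exact le_of_le_of_eq h2 (mul_comm _ _)
  -- Hahn–Banach: the dual sup is attained at value μ * N w
  have hHB : ∃ v : Fin m → ℝ, Nstar v ≤ μ ∧ ∑ a, v a * w a = μ * N w := by
    rcases eq_or_ne w 0 with hw0 | hw0
    · refine ⟨0, ?_, by simp [hw0, hN0]⟩
      simp only [hNstar]
      refine Real.sSup_le ?_ hμ
      rintro x ⟨z, hz, rfl⟩
      show ∑ a, (0:Fin m → ℝ) a * z a ≤ μ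
      simpa using hμ
    · set f : (Fin m → ℝ) →ₗ.[ℝ] ℝ := LinearPMap.mkSpanSingleton w (μ * N w) hw0 with hf
      have hfle : ∀ x : f.domain, f x ≤ μ * N x.1 := by
        rintro ⟨x, hx⟩
        obtain ⟨cc, hcc⟩ := Submodule.mem_span_singleton.1 hx
        subst hcc
        have happ : f ⟨cc • w, hx⟩ = cc • (μ * N w) :=
          LinearPMap.mkSpanSingleton'_apply w (μ * N w) _ cc hx
        rw [happ, smul_eq_mul]
        show cc * (μ * N w) ≤ μ * N (cc • w)
        rw [hN_smul]
        nlinarith [le_abs_self cc,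
          mul_nonneg (mul_nonneg (sub_nonneg.2 (le_abs_self cc)) hμ) (hNnn w)]
      obtain ⟨g, hg_eq, hg_le⟩ := exists_extension_of_le_sublinear f (fun x => μ * N x)
        (fun t ht x => by
          show μ * N (t • x) = t * (μ * N x)
          rw [hN_smul, abs_of_pos ht]; ring)
        (fun x z => by
          show μ * N (x + z) ≤ μ * N x + μ * N z
          have := hN_add x z; nlinarith)
        hfle
      set v : Fin m → ℝ := fun a => g (fun j => if a = j then 1 else 0) with hv
      have hg_sum : ∀ x : Fin m → ℝ, ∑ a, v a * x a = g x := by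
        intro x
        conv_rhs => rw [pi_eq_sum_univ x]
        rw [map_sum]
        exact Finset.sum_congr rfl fun a _ => by rw [map_smul, smul_eq_mul, mul_comm]
      have hgw : g w = μ * N w := by
        have h1 := hg_eq ⟨w, Submodule.mem_span_singleton_self w⟩
        have h2 : f ⟨w, Submodule.mem_span_singleton_self w⟩ = μ * N w :=
          LinearPMap.mkSpanSingleton'_apply_self w (μ * N w) _ _
        rw [h1, h2]
      refine ⟨v, ?_, by rw [hg_sum, hgw]⟩
      simp only [hNstar]
      refine Real.sSup_le ?_ hμ
      rintro x ⟨z, hz, rfl⟩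
      show ∑ a, v a * z a ≤ μ
      rw [hg_sum]
      have h5 : g z ≤ μ * N z := hg_le z
      have hz' : N z ≤ 1 := hz
      nlinarith [hNnn z]
  obtain ⟨v₀, hv₀f, hv₀e⟩ := hHB
  set d : Fin m → ℝ := v₀ - vhat with hd
  -- feasibility along the segment
  have hfeas : ∀ t : ℝ, 0 ≤ t → t ≤ 1 → Nstar (vhat + t • d) ≤ μ := by
    intro t ht0 ht1
    simp only [hNstar]
    refine Real.sSup_le ?_ hμ
    rintro x ⟨z, hz, rfl⟩
    show ∑ a, (vhat + t • d) a * z a ≤ μ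
    have h1 := le_trans (hle_star vhat z hz) hvhat_feas
    have h2 := le_trans (hle_star v₀ z hz) hv₀f
    have hsplit : ∑ a, (vhat + t • d) a * z a
        = (1-t) * ∑ a, vhat a * z a + t * ∑ a, v₀ a * z a := by
      rw [Finset.mul_sum, Finset.mul_sum, ← Finset.sum_add_distrib]
      refine Finset.sum_congr rfl fun a _ => ?_
      simp only [Pi.add_apply, Pi.smul_apply, Pi.sub_apply, smul_eq_mul, hd]
      ring
    rw [hsplit]
    nlinarith
  -- expansion of the dual objective
  have hexp : ∀ t : ℝ, ∑ i, (y i - (B.transpose.mulVec (vhat + t • d)) i)^2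
      = ∑ i, (y i - B.transpose.mulVec vhat i)^2 - 2*t*(∑ a, d a * w a)
        + t^2 * ∑ i, (B.transpose.mulVec d i)^2 := by
    intro t
    have hBt : B.transpose.mulVec (vhat + t • d)
        = B.transpose.mulVec vhat + t • B.transpose.mulVec d := by
      rw [Matrix.mulVec_add, Matrix.mulVec_smul]
    have hA' : ∑ i, θs i * (B.transpose.mulVec d) i = ∑ a, d a * w a := by
      have h1 := hpair d θs
      rw [← hw] at h1
      rw [← h1]
      exact Finset.sum_congr rfl fun i _ => mul_comm _ _
    have hper : ∀ i, (y i - (B.transpose.mulVec vhat + t • B.transpose.mulVec d) i)^2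
        = (y i - B.transpose.mulVec vhat i)^2 - 2*t*(θs i * B.transpose.mulVec d i)
          + t^2 * (B.transpose.mulVec d i)^2 := by
      intro i
      have hθsi : θs i = y i - B.transpose.mulVec vhat i := by rw [hθs]; simp
      rw [hθsi]
      simp only [Pi.add_apply, Pi.smul_apply, smul_eq_mul]
      ring
    rw [hBt, Finset.sum_congr rfl fun i _ => hper i, Finset.sum_add_distrib,
      Finset.sum_sub_distrib, ← Finset.mul_sum, ← Finset.mul_sum, hA']
  -- variational inequality
  have hA : (∑ a, d a * w a) ≤ 0 := by
    by_contra hAc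
    push_neg at hAc
    set A := ∑ a, d a * w a with hAdef
    set q := ∑ i, (B.transpose.mulVec d i)^2 with hq
    have hQ0 : 0 ≤ q := Finset.sum_nonneg fun i _ => sq_nonneg _
    have hkey : ∀ t : ℝ, 0 < t → t ≤ 1 → 2 * A ≤ t * q := by
      intro t ht0 ht1
      have h := hvhat _ (hfeas t ht0.le ht1)
      rw [hexp t] at h
      have h3 : t * (2 * A) ≤ t * (t * q) := by nlinarith
      exact (mul_le_mul_iff_right₀ ht0).1 h3
    have h1 := hkey 1 one_pos le_rfl
    rw [one_mul] at h1
    have hq_pos : 0 < q := by nlinarith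
    have ht1 : A / q ≤ 1 := by rw [div_le_one hq_pos]; nlinarith
    have ht0 : 0 < A / q := div_pos hAc hq_pos
    have h2 := hkey (A/q) ht0 ht1
    rw [div_mul_cancel₀ _ hq_pos.ne'] at h2
    linarith
  -- equality at the optimum
  have hvw : ∑ a, vhat a * w a = μ * N w := by
    have hle : ∑ a, vhat a * w a ≤ μ * N w :=
      le_trans (hHolder vhat w) (mul_le_mul_of_nonneg_right hvhat_feas (hNnn w))
    have hdiff : ∑ a, d a * w a = ∑ a, v₀ a * w a - ∑ a, vhat a * w a := by
      rw [← Finset.sum_sub_distrib]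
      exact Finset.sum_congr rfl fun a _ => by
        simp only [hd, Pi.sub_apply]; ring
    rw [hdiff, hv₀e] at hA
    linarith
  -- final comparison
  have hθhat_ineq := hθhat θs
  rw [← hw] at hθhat_ineq
  have hH_hat : ∑ i, (B.transpose.mulVec vhat) i * θhat i ≤ μ * N (B.mulVec θhat) := by
    rw [hpair]
    exact le_trans (hHolder vhat _) (mul_le_mul_of_nonneg_right hvhat_feas (hNnn _))
  have hH_s : ∑ i, (B.transpose.mulVec vhat) i * θs i = μ * N w := by
    have h1 := hpair vhat θs
    rw [← hw] at h1
    rw [h1, hvw]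
  have hsum_id : (1/2) * ∑ i, (y i - θhat i)^2 + ∑ i, (B.transpose.mulVec vhat) i * θhat i
      = (1/2) * ∑ i, (y i - θs i)^2 + ∑ i, (B.transpose.mulVec vhat) i * θs i
        + (1/2) * ∑ i, (θhat i - θs i)^2 := by
    rw [Finset.mul_sum, Finset.mul_sum, Finset.mul_sum, ← Finset.sum_add_distrib,
      ← Finset.sum_add_distrib, ← Finset.sum_add_distrib]
    refine Finset.sum_congr rfl fun i _ => ?_
    have hθsi : θs i = y i - B.transpose.mulVec vhat i := by rw [hθs]; simp
    have h1 : B.transpose.mulVec vhat i = y i - θs i := by rw [hθsi]; ring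
    rw [h1]; ring
  have hD : ∑ i, (θhat i - θs i)^2 ≤ 0 := by linarith
  have h0 : ∀ j ∈ Finset.univ, (0:ℝ) ≤ (θhat j - θs j)^2 := fun j _ => sq_nonneg _
  have hDz := (Finset.sum_eq_zero_iff_of_nonneg h0).1
    (le_antisymm hD (Finset.sum_nonneg h0))
  funext i
  have := hDz i (Finset.mem_univ i)
  have h2 : θhat i - θs i = 0 := by
    have := sq_eq_zero_iff.1 this
    exact this
  have h3 : θhat i = θs i := by linarith
  simpa [hθs] using h3
end
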